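/- Let (Γ,d) be a countable group with a left-invariant metric d such that (Γ,d) is a proper, δ-hyperbolic, uniformly (1,c)-quasi-geodesic metric space, and suppose there are constants v, C₀ > 0 with C₀⁻¹·e^{v·r} ≤ |B(g,r)| ≤ C₀·e^{v·r} for all g ∈ Γ and r > 0. Then there exist constants a₀, T₀ > 0 and C₁ ≥ 1, depending only on δ, c, v, C₀, such that for every Gromov sequence {q_n} in Γ with horofunction h(z) = liminf_{n→∞}(d(z,q_n) − d(q_n,e)), for all a ≥ a₀, all reals T₁ ≤ T₂ with T₂ − T₁ ≥ T₀, and every r > 0 with r ≥ max(|T₁|,|T₂|) − 2c: C₁⁻¹·e^{v(r+T₂)/2} ≤ |{g ∈ Γ : r − a < d(e,g) ≤ r and T₁ ≤ h(g) ≤ T₂}| ≤ C₁·e^{v(r+T₂)/2}. -/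

import Mathlib

open Filter Set Metric
open scoped Topology

/-- The Gromov product `(x|y)_z = (d(x,z) + d(y,z) − d(x,y))/2`. -/
noncomputable def gromovProd {X : Type*} [MetricSpace X] (x y z : X) : ℝ :=
  (dist x z + dist y z - dist x y) / 2

/-- `(X,d)` is δ-hyperbolic: `(x|y)_w ≥ min((x|z)_w, (y|z)_w) − δ` for all points. -/
def IsDeltaHyperbolic (X : Type*) [MetricSpace X] (δ : ℝ) : Prop :=
  ∀ x y z w : X, min (gromovProd x z w) (gromovProd y z w) - δ ≤ gromovProd x y w

/-- A Gromov sequence (with respect to the basepoint `z`): `(x_i|x_j)_z → ∞` as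
`i, j → ∞`. -/
def IsGromovSeq {X : Type*} [MetricSpace X] (z : X) (x : ℕ → X) : Prop :=
  Tendsto (fun p : ℕ × ℕ => gromovProd (x p.1) (x p.2) z) atTop atTop

/-- `γ` is a `(1,c)`-quasi-geodesic on the set `s ⊆ ℝ`. -/
def IsQuasiGeodesicOn {X : Type*} [MetricSpace X] (γ : ℝ → X) (s : Set ℝ) (c : ℝ) : Prop :=
  ∀ u ∈ s, ∀ v ∈ s, |u - v| - c ≤ dist (γ u) (γ v) ∧ dist (γ u) (γ v) ≤ |u - v| + c

/-- The horofunction of a Gromov sequence `q`, with basepoint the identity: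
`h(z) = liminf_n (d(z,q_n) − d(q_n,e))`. -/
noncomputable def horofn {Γ : Type*} [Group Γ] [MetricSpace Γ] (q : ℕ → Γ) (z : Γ) : ℝ :=
  Filter.liminf (fun n => dist z (q n) - dist (q n) (1 : Γ)) Filter.atTop

/-! ### Auxiliary lemmas -/

lemma gp_nonneg {X : Type*} [MetricSpace X] (x y z : X) : 0 ≤ gromovProd x y z := by
  have h := dist_triangle x z y
  have h2 : dist z y = dist y z := dist_comm z y
  simp only [gromovProd]
  linarith

lemma gp_le_left {X : Type*} [MetricSpace X] (x y z : X) : gromovProd x y z ≤ dist x z := by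
  have h := dist_triangle y x z
  have h2 : dist y x = dist x y := dist_comm y x
  simp only [gromovProd]
  linarith

lemma gp_comm {X : Type*} [MetricSpace X] (x y z : X) : gromovProd x y z = gromovProd y x z := by
  simp only [gromovProd, dist_comm x y]
  ring

lemma gp_self {X : Type*} [MetricSpace X] (x z : X) : gromovProd x x z = dist x z := by
  simp [gromovProd]

lemma liminf_bounds {u : ℕ → ℝ} {A B : ℝ}
    (hA : ∀ᶠ m in atTop, A ≤ u m) (hB : ∀ᶠ m in atTop, u m ≤ B) :
    A ≤ liminf u atTop ∧ liminf u atTop ≤ B := by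
  have hbdd : IsBoundedUnder (· ≥ ·) atTop u := ⟨A, by simpa using hA⟩
  have hcob : IsCoboundedUnder (· ≥ ·) atTop u :=
    Filter.isCoboundedUnder_ge_of_eventually_le atTop hB
  exact ⟨le_liminf_of_le hcob hA, liminf_le_of_frequently_le hB.frequently hbdd⟩

lemma exists_qg_point {X : Type*} [MetricSpace X] {c : ℝ} {x w : X}
    (hqg : ∃ (a b : ℝ) (γ : ℝ → X), a ≤ b ∧ γ a = x ∧ γ b = w ∧
      IsQuasiGeodesicOn γ (Set.Icc a b) c)
    {t : ℝ} (ht0 : 0 ≤ t) (ht : t ≤ dist x w - c) :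
    ∃ p : X, dist p x ≤ t + c ∧ t - c ≤ dist p x ∧ dist p w ≤ dist x w - t + 2 * c := by
  obtain ⟨α, β, γ, hab, hγa, hγb, hγ⟩ := hqg
  have hαβ : |α - β| = β - α := by rw [abs_sub_comm]; exact abs_of_nonneg (by linarith)
  have hends := hγ α ⟨le_refl _, hab⟩ β ⟨hab, le_refl _⟩
  rw [hγa, hγb, hαβ] at hends
  have hu : α + t ∈ Set.Icc α β := ⟨by linarith, by linarith [hends.2]⟩
  refine ⟨γ (α + t), ?_, ?_, ?_⟩
  · have h1 := (hγ (α + t) hu α ⟨le_refl _, hab⟩).2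
    rw [hγa] at h1
    have : |α + t - α| = t := by rw [show α + t - α = t by ring]; exact abs_of_nonneg ht0
    linarith [this ▸ h1]
  · have h1 := (hγ (α + t) hu α ⟨le_refl _, hab⟩).1
    rw [hγa] at h1
    have : |α + t - α| = t := by rw [show α + t - α = t by ring]; exact abs_of_nonneg ht0
    linarith [this ▸ h1]
  · have h1 := (hγ (α + t) hu β ⟨hab, le_refl _⟩).2
    rw [hγb] at h1
    have habs : |α + t - β| = β - α - t := by
      rw [abs_sub_comm]
      rw [show β - (α + t) = β - α - t by ring]
      exact abs_of_nonneg (by linarith [hu.2])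
    rw [habs] at h1
    linarith [hends.1]

lemma card_le_ball {Γ : Type} [MetricSpace Γ]
    (hproper : ∀ (g : Γ) (r : ℝ), (closedBall g r).Finite)
    {S : Set Γ} {g : Γ} {R : ℝ} (h : ∀ u ∈ S, dist g u ≤ R) :
    (S.ncard : ℝ) ≤ (Nat.card ↥(closedBall g R) : ℝ) := by
  rw [Nat.card_coe_set_eq]
  exact_mod_cast Set.ncard_le_ncard
    (fun u hu => by simpa [mem_closedBall, dist_comm] using h u hu) (hproper g R)

lemma shadow_card_le {Γ : Type} [Group Γ] [MetricSpace Γ]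
    {δ c v C₀ : ℝ} (hδ : 0 < δ) (hc : 0 < c) (hv : 0 < v) (hC₀1 : 1 ≤ C₀)
    (hproper : ∀ (g : Γ) (r : ℝ), (closedBall g r).Finite)
    (hhyp : IsDeltaHyperbolic Γ δ)
    (hqg : ∀ x y : Γ, ∃ (a b : ℝ) (γ : ℝ → Γ), a ≤ b ∧ γ a = x ∧ γ b = y ∧
      IsQuasiGeodesicOn γ (Set.Icc a b) c)
    (hgrowth : ∀ (g : Γ) (r : ℝ), 0 < r →
      C₀⁻¹ * Real.exp (v * r) ≤ (Nat.card ↥(closedBall g r) : ℝ) ∧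
      (Nat.card ↥(closedBall g r) : ℝ) ≤ C₀ * Real.exp (v * r))
    (w : Γ) (ρ K : ℝ) (hK : 0 < K) (hrad : 0 < ρ - K + (5 * c + 2 * δ)) :
    (({u : Γ | dist 1 u ≤ ρ ∧ K ≤ gromovProd u w 1}).ncard : ℝ)
      ≤ C₀ * Real.exp (v * (ρ - K + (5 * c + 2 * δ))) := by
  set S : Set Γ := {u : Γ | dist 1 u ≤ ρ ∧ K ≤ gromovProd u w 1} with hS
  have hCpos : (0:ℝ) < C₀ := lt_of_lt_of_le one_pos hC₀1
  by_cases hw : dist 1 w < K + c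
  · have hsub : ∀ u ∈ S, dist w u ≤ ρ - K + c := by
      intro u hu
      obtain ⟨h1, h2⟩ := hu
      have hgp : gromovProd u w 1 = (dist u 1 + dist w 1 - dist u w) / 2 := rfl
      have hd1 : dist u 1 = dist 1 u := dist_comm u 1
      have hd2 : dist w 1 = dist 1 w := dist_comm w 1
      have hd3 : dist u w = dist w u := dist_comm u w
      rw [hgp] at h2
      linarith
    by_cases hr2 : 0 < ρ - K + c
    · calc (S.ncard : ℝ) ≤ _ := card_le_ball hproper hsub
        _ ≤ C₀ * Real.exp (v * (ρ - K + c)) := (hgrowth w _ hr2).2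
        _ ≤ C₀ * Real.exp (v * (ρ - K + (5 * c + 2 * δ))) := by
            have : v * (ρ - K + c) ≤ v * (ρ - K + (5 * c + 2 * δ)) := by nlinarith
            exact mul_le_mul_of_nonneg_left (Real.exp_le_exp.2 this) (le_of_lt hCpos)
    · have hsub2 : S ⊆ {w} := by
        intro u hu
        have := hsub u hu
        have h0 : dist w u = 0 := le_antisymm (by linarith) dist_nonneg
        simp [Set.mem_singleton_iff, eq_comm, ← dist_eq_zero.1 h0]
      have hle1 : (S.ncard : ℝ) ≤ 1 := by
        have := Set.ncard_le_ncard hsub2 (Set.finite_singleton w)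
        simpa using (Nat.cast_le.2 this : (S.ncard : ℝ) ≤ (({w} : Set Γ).ncard : ℝ))
      calc (S.ncard : ℝ) ≤ 1 := hle1
        _ ≤ C₀ * Real.exp (v * (ρ - K + (5 * c + 2 * δ))) := by
            have h1 : (1:ℝ) ≤ Real.exp (v * (ρ - K + (5 * c + 2 * δ))) :=
              Real.one_le_exp (by nlinarith)
            nlinarith
  · push_neg at hw
    obtain ⟨p, hp1, hp2, hp3⟩ := exists_qg_point (hqg 1 w) (le_of_lt hK) (by linarith)
    have hgpw : K - 2 * c ≤ gromovProd p w 1 := by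
      have hid : gromovProd p w 1 = (dist p 1 + dist w 1 - dist p w) / 2 := rfl
      have hd2 : dist w 1 = dist 1 w := dist_comm w 1
      rw [hid]
      linarith
    have hsub : ∀ u ∈ S, dist p u ≤ ρ - K + (5 * c + 2 * δ) := by
      intro u hu
      obtain ⟨h1, h2⟩ := hu
      have hhyp1 := hhyp u p w 1
      have hmin : K - 2 * c ≤ min (gromovProd u w 1) (gromovProd p w 1) :=
        le_min (by linarith) hgpw
      have hup : K - 2 * c - δ ≤ gromovProd u p 1 := by linarith
      have hgp : gromovProd u p 1 = (dist u 1 + dist p 1 - dist u p) / 2 := rfl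
      have hd1 : dist u 1 = dist 1 u := dist_comm u 1
      have hd3 : dist u p = dist p u := dist_comm u p
      rw [hgp] at hup
      linarith
    calc (S.ncard : ℝ) ≤ _ := card_le_ball hproper hsub
      _ ≤ C₀ * Real.exp (v * (ρ - K + (5 * c + 2 * δ))) := (hgrowth p _ hrad).2

lemma aux_inv {a b e : ℝ} (hb : 0 < b) (he : 0 < e) (ha : 0 < a) (h : b * e ≤ a) :
    a⁻¹ * e ≤ b⁻¹ := by
  have h1 : a⁻¹ ≤ (b * e)⁻¹ := inv_anti₀ (by positivity) h
  calc a⁻¹ * e ≤ (b * e)⁻¹ * e := by nlinarith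
    _ = b⁻¹ := by field_simp

lemma card_union3 {Γ : Type} {A B C D : Set Γ} (h : A ⊆ B ∪ C ∪ D)
    (hB : B.Finite) (hC : C.Finite) (hD : D.Finite) :
    (A.ncard : ℝ) ≤ B.ncard + C.ncard + D.ncard := by
  have h1 : A.ncard ≤ (B ∪ C ∪ D).ncard :=
    Set.ncard_le_ncard h ((hB.union hC).union hD)
  have h2 : (B ∪ C ∪ D).ncard ≤ (B ∪ C).ncard + D.ncard := Set.ncard_union_le _ _
  have h3 : (B ∪ C).ncard ≤ B.ncard + C.ncard := Set.ncard_union_le _ _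
  exact_mod_cast le_trans h1 (le_trans h2 (by omega))

set_option maxHeartbeats 2000000 in
/-- Lemma 5.4 / Lemma `vol2` of the paper: in a proper, δ-hyperbolic,
uniformly `(1,c)`-quasi-geodesic group with exponential ball growth `|B(g,r)| ≍ e^{vr}`,
the cardinality of the intersection of the annulus `S(e;r−a,r)` with the horoshell
`{T₁ ≤ h ≤ T₂}` is comparable to `e^{v(r+T₂)/2}`, uniformly in the horofunction,
provided `a ≥ a₀`. -/
theorem stmt17 {Γ : Type} [Group Γ] [Countable Γ] [MetricSpace Γ]
    (δ c v C₀ : ℝ) (hδ : 0 < δ) (hc : 0 < c) (hv : 0 < v) (hC₀ : 0 < C₀)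
    (hleft : ∀ g x y : Γ, dist (g * x) (g * y) = dist x y)
    (hproper : ∀ (g : Γ) (r : ℝ), (closedBall g r).Finite)
    (hhyp : IsDeltaHyperbolic Γ δ)
    (hqg : ∀ x y : Γ, ∃ (a b : ℝ) (γ : ℝ → Γ), a ≤ b ∧ γ a = x ∧ γ b = y ∧
      IsQuasiGeodesicOn γ (Set.Icc a b) c)
    (hgrowth : ∀ (g : Γ) (r : ℝ), 0 < r →
      C₀⁻¹ * Real.exp (v * r) ≤ (Nat.card ↥(closedBall g r) : ℝ) ∧
      (Nat.card ↥(closedBall g r) : ℝ) ≤ C₀ * Real.exp (v * r)) :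
    ∃ a₀ T₀ : ℝ, 0 < a₀ ∧ 0 < T₀ ∧ ∃ C₁ : ℝ, 1 ≤ C₁ ∧
      ∀ q : ℕ → Γ, IsGromovSeq (1 : Γ) q →
        ∀ a T₁ T₂ r : ℝ, a₀ ≤ a → T₀ ≤ T₂ - T₁ → 0 < r → max |T₁| |T₂| - 2 * c ≤ r →
          C₁⁻¹ * Real.exp (v * (r + T₂) / 2) ≤
            (Nat.card ↥{g : Γ | r - a < dist (1 : Γ) g ∧ dist (1 : Γ) g ≤ r ∧
              T₁ ≤ horofn q g ∧ horofn q g ≤ T₂} : ℝ) ∧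
          (Nat.card ↥{g : Γ | r - a < dist (1 : Γ) g ∧ dist (1 : Γ) g ≤ r ∧
              T₁ ≤ horofn q g ∧ horofn q g ≤ T₂} : ℝ) ≤
            C₁ * Real.exp (v * (r + T₂) / 2) := by
  -- C₀ ≥ 1
  have hC₀1 : 1 ≤ C₀ := by
    have h := hgrowth 1 1 one_pos
    have hexp : 0 < Real.exp (v * 1) := Real.exp_pos _
    have hinv : C₀⁻¹ ≤ C₀ := le_of_mul_le_mul_right (le_trans h.1 h.2) hexp
    nlinarith only [mul_le_mul_of_nonneg_left hinv (le_of_lt hC₀), mul_inv_cancel₀ (ne_of_gt hC₀), hC₀]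
  -- constants
  obtain ⟨K₃, hK₃def⟩ : ∃ y : ℝ, y = 5 * c + 2 * δ := ⟨_, rfl⟩
  obtain ⟨K, hKdef⟩ : ∃ y : ℝ, y = Real.log (8 * C₀ ^ 2) / v + K₃ := ⟨_, rfl⟩
  obtain ⟨b, hbdef⟩ : ∃ y : ℝ, y = Real.log (2 * C₀ ^ 2) / v := ⟨_, rfl⟩
  obtain ⟨M₁, hM₁def⟩ : ∃ y : ℝ, y = 2 * K + 5 * c + 4 * δ := ⟨_, rfl⟩
  obtain ⟨M₂, hM₂def⟩ : ∃ y : ℝ, y = b + 4 * K + 3 * c + 4 * δ := ⟨_, rfl⟩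
  obtain ⟨a₀, ha₀def⟩ : ∃ y : ℝ, y = b + 2 * K + 2 * c + 1 := ⟨_, rfl⟩
  obtain ⟨KU, hKUdef⟩ : ∃ y : ℝ, y = 5 * c + 4 * δ := ⟨_, rfl⟩
  obtain ⟨L', hL'def⟩ : ∃ y : ℝ, y = M₁ + c + 2 * (b + K + 1) := ⟨_, rfl⟩
  obtain ⟨T₀, hT₀def⟩ : ∃ y : ℝ, y = M₁ + M₂ + 2 * c + L' + 1 := ⟨_, rfl⟩
  obtain ⟨C₁, hC₁def⟩ : ∃ y : ℝ, y = 4 * C₀ * Real.exp (v * (KU + (M₁ + c) / 2 + 1)) := ⟨_, rfl⟩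
  have hlog8 : 0 < Real.log (8 * C₀ ^ 2) := Real.log_pos (by nlinarith only [hC₀1, sq_nonneg (C₀ - 1)])
  have hlog2 : 0 < Real.log (2 * C₀ ^ 2) := Real.log_pos (by nlinarith only [hC₀1, sq_nonneg (C₀ - 1)])
  have hbpos : 0 < b := by rw [hbdef]; exact div_pos hlog2 hv
  have hK₃pos : 0 < K₃ := by rw [hK₃def]; linarith only [hc, hδ]
  have hKpos : 0 < K := by
    rw [hKdef]; linarith only [div_pos hlog8 hv, hK₃pos]
  have hKK₃ : K₃ ≤ K := by
    rw [hKdef]; linarith only [div_pos hlog8 hv]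
  have hM₁pos : 0 < M₁ := by rw [hM₁def]; linarith only [hKpos, hc, hδ]
  have hM₂pos : 0 < M₂ := by rw [hM₂def]; linarith only [hbpos, hKpos, hc, hδ]
  have hL'pos : 0 < L' := by rw [hL'def]; linarith only [hM₁pos, hc, hbpos, hKpos]
  have ha₀pos : 0 < a₀ := by rw [ha₀def]; linarith only [hbpos, hKpos, hc]
  have hT₀pos : 0 < T₀ := by rw [hT₀def]; linarith only [hM₁pos, hM₂pos, hc, hL'pos]
  have hKUpos : 0 < KU := by rw [hKUdef]; linarith only [hc, hδ]
  have hexpb : Real.exp (v * b) = 2 * C₀ ^ 2 := by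
    rw [hbdef, mul_comm, div_mul_cancel₀ _ (ne_of_gt hv)]
    exact Real.exp_log (by positivity)
  have hexpK : Real.exp (v * (K - K₃)) = 8 * C₀ ^ 2 := by
    have hKK : K - K₃ = Real.log (8 * C₀ ^ 2) / v := by rw [hKdef]; ring
    rw [hKK, mul_comm, div_mul_cancel₀ _ (ne_of_gt hv)]
    exact Real.exp_log (by positivity)
  have hC₁1 : 1 ≤ C₁ := by
    rw [hC₁def]
    have h1 : (1:ℝ) ≤ Real.exp (v * (KU + (M₁ + c) / 2 + 1)) :=
      Real.one_le_exp (mul_nonneg (le_of_lt hv) (by linarith only [hKUpos, hM₁pos, hc]))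
    have h2 := mul_le_mul hC₀1 h1 zero_le_one (le_trans zero_le_one hC₀1)
    linarith only [h2]
  refine ⟨a₀, T₀, ha₀pos, hT₀pos, C₁, hC₁1, ?_⟩
  intro q hq a T₁ T₂ r ha hT hr hmax
  -- basic bounds from the constraints
  have habs2 : |T₂| ≤ r + 2 * c := by
    linarith only [le_max_right |T₁| |T₂|, hmax]
  have hT₂r : T₂ ≤ r + 2 * c := le_trans (le_abs_self T₂) habs2
  have hT₁r : -(r + 2 * c) ≤ T₁ := by
    have h1 := le_max_left |T₁| |T₂|
    have h2 := neg_abs_le T₁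
    linarith only [h1, h2, hmax]
  have hrT : T₀ - 2 * c ≤ r + T₂ := by linarith only [hT₁r, hT]
  have hrT2pos : 0 < r + T₂ := by
    rw [hT₀def] at hrT; linarith only [hrT, hM₁pos, hM₂pos, hL'pos, hc]
  obtain ⟨ρ, hρdef⟩ : ∃ y : ℝ, y = (r + T₂ - M₁ - c) / 2 := ⟨_, rfl⟩
  obtain ⟨ts, htsdef⟩ : ∃ y : ℝ, y = (r - T₂ + M₁ - c) / 2 := ⟨_, rfl⟩
  have hρK : b + K + 1 ≤ ρ := by
    rw [hρdef]
    rw [hT₀def, hL'def] at hrT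
    linarith only [hrT, hM₁pos, hM₂pos]
  have hρpos : 0 < ρ := by linarith only [hρK, hbpos, hKpos]
  have hρb : 0 < ρ - b := by linarith only [hρK, hKpos]
  have hts0 : 0 ≤ ts := by
    rw [htsdef, hM₁def]
    linarith only [hT₂r, hKpos, hc, hδ]
  have hsum : ts + ρ = r - c := by rw [htsdef, hρdef]; ring
  have hdiff : ρ - ts = T₂ - M₁ := by rw [htsdef, hρdef]; ring
  obtain ⟨R_F, hRFdef⟩ : ∃ y : ℝ, y = 2 * r + 2 * c + 3 := ⟨_, rfl⟩
  -- choose the reference point x = q n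
  have hev : ∀ᶠ pr : ℕ × ℕ in atTop, R_F ≤ gromovProd (q pr.1) (q pr.2) 1 :=
    hq.eventually_ge_atTop R_F
  obtain ⟨N, hN⟩ := Filter.eventually_atTop.1 hev
  set n : ℕ := max N.1 N.2 with hndef
  have hxq : ∀ m, n ≤ m → R_F ≤ gromovProd (q n) (q m) 1 := by
    intro m hm
    exact hN (n, m) (Prod.le_def.2 ⟨le_max_left _ _, le_trans (le_max_right _ _) hm⟩)
  set x : Γ := q n with hxdef
  have hxnorm : R_F ≤ dist 1 x := by
    have h1 := hxq n le_rfl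
    rw [gp_self] at h1
    rwa [dist_comm]
  -- horofunction estimate
  have hhoro : ∀ g : Γ, dist 1 g ≤ R_F →
      dist 1 g - 2 * gromovProd g x 1 - 2 * δ ≤ horofn q g ∧
      horofn q g ≤ dist 1 g - 2 * gromovProd g x 1 + 2 * δ := by
    intro g hg
    have key : ∀ m, n ≤ m →
        gromovProd g x 1 - δ ≤ gromovProd g (q m) 1 ∧
        gromovProd g (q m) 1 ≤ gromovProd g x 1 + δ := by
      intro m hm
      have hbig := hxq m hm
      have hgleft : gromovProd g x 1 ≤ dist g 1 := gp_le_left g x 1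
      have hgleft2 : gromovProd g (q m) 1 ≤ dist g 1 := gp_le_left g (q m) 1
      have hdg : dist g 1 = dist 1 g := dist_comm g 1
      constructor
      · have h1 := hhyp g (q m) x 1
        have hmin : min (gromovProd g x 1) (gromovProd (q m) x 1) = gromovProd g x 1 := by
          apply min_eq_left
          calc gromovProd g x 1 ≤ dist g 1 := hgleft
            _ ≤ R_F := by linarith only [hg, hdg]
            _ ≤ gromovProd x (q m) 1 := hbig
            _ = gromovProd (q m) x 1 := gp_comm x (q m) 1
        rw [hmin] at h1
        linarith only [h1]
      · have h1 := hhyp g x (q m) 1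
        have hmin : min (gromovProd g (q m) 1) (gromovProd x (q m) 1)
            = gromovProd g (q m) 1 := by
          apply min_eq_left
          calc gromovProd g (q m) 1 ≤ dist g 1 := hgleft2
            _ ≤ R_F := by linarith only [hg, hdg]
            _ ≤ gromovProd x (q m) 1 := hbig
        rw [hmin] at h1
        linarith only [h1]
    have hA : ∀ᶠ m in atTop,
        dist 1 g - 2 * gromovProd g x 1 - 2 * δ ≤ dist g (q m) - dist (q m) 1 := by
      filter_upwards [eventually_ge_atTop n] with m hm
      have h2 := (key m hm).2
      have hgp : gromovProd g (q m) 1 = (dist g 1 + dist (q m) 1 - dist g (q m)) / 2 := rfl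
      have hdg : dist g 1 = dist 1 g := dist_comm g 1
      rw [hgp] at h2
      linarith only [h2, hdg]
    have hB : ∀ᶠ m in atTop,
        dist g (q m) - dist (q m) 1 ≤ dist 1 g - 2 * gromovProd g x 1 + 2 * δ := by
      filter_upwards [eventually_ge_atTop n] with m hm
      have h2 := (key m hm).1
      have hgp : gromovProd g (q m) 1 = (dist g 1 + dist (q m) 1 - dist g (q m)) / 2 := rfl
      have hdg : dist g 1 = dist 1 g := dist_comm g 1
      rw [hgp] at h2
      linarith only [h2, hdg]
    exact liminf_bounds hA hB
  -- the horoshell set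
  set S : Set Γ := {g : Γ | r - a < dist (1 : Γ) g ∧ dist (1 : Γ) g ≤ r ∧
      T₁ ≤ horofn q g ∧ horofn q g ≤ T₂} with hSdef
  have hSfin : S.Finite := (hproper 1 r).subset (by
    intro g hg
    rw [mem_closedBall, dist_comm]
    exact hg.2.1)
  have hcard : (Nat.card ↥S : ℝ) = (S.ncard : ℝ) := by rw [Nat.card_coe_set_eq]
  rw [hcard]
  have hsplitU : Real.exp (v * ((r + T₂) / 2 + KU))
      = Real.exp (v * (r + T₂) / 2) * Real.exp (v * KU) := by
    rw [← Real.exp_add]; congr 1; ring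
  constructor
  · -- LOWER BOUND
    have htsx : ts ≤ dist 1 x - c := by
      rw [hRFdef] at hxnorm
      linarith only [hxnorm, hsum, hρpos, hr, hc]
    obtain ⟨p, hp1, hp2, hp3⟩ := exists_qg_point (hqg 1 x) hts0 htsx
    have hgppx : ts - 2 * c ≤ gromovProd p x 1 := by
      have hid : gromovProd p x 1 = (dist p 1 + dist x 1 - dist p x) / 2 := rfl
      have hd2 : dist x 1 = dist 1 x := dist_comm x 1
      rw [hid]
      linarith only [hp2, hp3, hd2, hc]
    set w₁ : Γ := p⁻¹ with hw₁def
    set w₂ : Γ := p⁻¹ * x with hw₂def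
    have hw₁norm : dist w₁ 1 = dist p 1 := by
      have h1 := hleft p p⁻¹ 1
      simp only [mul_inv_cancel, mul_one] at h1
      rw [hw₁def, ← h1, dist_comm]
    have hdw₂ : dist w₂ 1 = dist x p := by
      have h1 := hleft p w₂ 1
      rw [hw₂def] at h1 ⊢
      simp only [mul_inv_cancel_left, mul_one] at h1
      rw [← h1]
    have hmulnorm : ∀ u : Γ, dist (p * u) 1 = dist u w₁ := by
      intro u
      have h1 := hleft p u p⁻¹
      simp only [mul_inv_cancel] at h1
      rw [hw₁def, ← h1]
    have hmulx : ∀ u : Γ, dist (p * u) x = dist u w₂ := by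
      intro u
      have h1 := hleft p u w₂
      rw [hw₂def] at h1
      simp only [mul_inv_cancel_left] at h1
      rw [hw₂def, ← h1]
    have hmulp : ∀ u : Γ, dist p (p * u) = dist 1 u := by
      intro u
      have h1 := hleft p 1 u
      simpa using h1
    set Ann : Set Γ := {u : Γ | dist 1 u ≤ ρ ∧ ρ - b < dist 1 u} with hAnndef
    set Sh1 : Set Γ := {u : Γ | dist 1 u ≤ ρ ∧ K ≤ gromovProd u w₁ 1} with hSh1def
    set Sh2 : Set Γ := {u : Γ | dist 1 u ≤ ρ ∧ K ≤ gromovProd u w₂ 1} with hSh2def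
    set U : Set Γ := Ann \ (Sh1 ∪ Sh2) with hUdef
    have hfin' : ∀ R : ℝ, ({u : Γ | dist 1 u ≤ R}).Finite := fun R =>
      (hproper 1 R).subset (fun u hu => by rw [mem_closedBall, dist_comm]; exact hu)
    have hAnnfin : Ann.Finite := (hfin' ρ).subset (fun u hu => hu.1)
    have hSh1fin : Sh1.Finite := (hfin' ρ).subset (fun u hu => hu.1)
    have hSh2fin : Sh2.Finite := (hfin' ρ).subset (fun u hu => hu.1)
    have hUfin : U.Finite := hAnnfin.subset (fun u hu => hu.1)
    -- annulus lower bound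
    have hballρ : C₀⁻¹ * Real.exp (v * ρ) ≤ (({u : Γ | dist 1 u ≤ ρ}).ncard : ℝ) := by
      have heq : {u : Γ | dist 1 u ≤ ρ} = closedBall 1 ρ := by
        ext u; simp [mem_closedBall, dist_comm]
      rw [heq, ← Nat.card_coe_set_eq]
      exact (hgrowth 1 ρ hρpos).1
    have hballρb : (({u : Γ | dist 1 u ≤ ρ - b}).ncard : ℝ)
        ≤ C₀⁻¹ / 2 * Real.exp (v * ρ) := by
      have h1 : (({u : Γ | dist 1 u ≤ ρ - b}).ncard : ℝ)
          ≤ C₀ * Real.exp (v * (ρ - b)) :=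
        le_trans (card_le_ball hproper (fun u hu => hu)) (hgrowth 1 (ρ - b) hρb).2
      have h2 : C₀ * Real.exp (v * (ρ - b)) = C₀⁻¹ / 2 * Real.exp (v * ρ) := by
        rw [mul_sub, Real.exp_sub, hexpb]
        field_simp
      exact h2 ▸ h1
    have hsplitAnn : {u : Γ | dist 1 u ≤ ρ} ⊆ Ann ∪ {u : Γ | dist 1 u ≤ ρ - b} := by
      intro u hu
      rcases le_or_gt (dist 1 u) (ρ - b) with h | h
      · exact Or.inr h
      · exact Or.inl ⟨hu, h⟩
    have hAnncard : C₀⁻¹ / 2 * Real.exp (v * ρ) ≤ (Ann.ncard : ℝ) := by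
      have h1 : (({u : Γ | dist 1 u ≤ ρ}).ncard : ℝ)
          ≤ (Ann.ncard : ℝ) + (({u : Γ | dist 1 u ≤ ρ - b}).ncard : ℝ) := by
        have := Set.ncard_le_ncard hsplitAnn (hAnnfin.union (hfin' (ρ - b)))
        have h2 := Set.ncard_union_le Ann {u : Γ | dist 1 u ≤ ρ - b}
        exact_mod_cast le_trans this h2
      have hhalf : C₀⁻¹ * Real.exp (v * ρ) - C₀⁻¹ / 2 * Real.exp (v * ρ)
          = C₀⁻¹ / 2 * Real.exp (v * ρ) := by ring
      linarith only [h1, hhalf, hballρ, hballρb]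
    -- shadow upper bounds
    have hrad : 0 < ρ - K + (5 * c + 2 * δ) := by
      rw [← hK₃def]; linarith only [hρK, hbpos, hK₃pos]
    have hshval : C₀ * Real.exp (v * (ρ - K + (5 * c + 2 * δ)))
        = C₀⁻¹ / 8 * Real.exp (v * ρ) := by
      have harg : v * (ρ - K + (5 * c + 2 * δ)) = v * ρ - v * (K - K₃) := by
        rw [hK₃def]; ring
      rw [harg, Real.exp_sub, hexpK]
      field_simp
    have hSh1card : (Sh1.ncard : ℝ) ≤ C₀⁻¹ / 8 * Real.exp (v * ρ) := by
      rw [← hshval]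
      exact shadow_card_le hδ hc hv hC₀1 hproper hhyp hqg hgrowth w₁ ρ K hKpos hrad
    have hSh2card : (Sh2.ncard : ℝ) ≤ C₀⁻¹ / 8 * Real.exp (v * ρ) := by
      rw [← hshval]
      exact shadow_card_le hδ hc hv hC₀1 hproper hhyp hqg hgrowth w₂ ρ K hKpos hrad
    have hUcard : C₀⁻¹ / 4 * Real.exp (v * ρ) ≤ (U.ncard : ℝ) := by
      have hsub3 : Ann ⊆ U ∪ Sh1 ∪ Sh2 := by
        intro u hu
        by_cases hm : u ∈ Sh1 ∪ Sh2
        · rcases hm with h | h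
          · exact Or.inl (Or.inr h)
          · exact Or.inr h
        · exact Or.inl (Or.inl ⟨hu, hm⟩)
      have := card_union3 hsub3 hUfin hSh1fin hSh2fin
      have hq4 : C₀⁻¹ / 2 * Real.exp (v * ρ) - 2 * (C₀⁻¹ / 8 * Real.exp (v * ρ))
          = C₀⁻¹ / 4 * Real.exp (v * ρ) := by ring
      linarith only [this, hq4, hAnncard, hSh1card, hSh2card]
    -- the image of U lies in S
    have himgsub : (fun u : Γ => p * u) '' U ⊆ S := by
      rintro g ⟨u, huU, rfl⟩
      have huAnn : u ∈ Ann := huU.1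
      have hu1 : dist 1 u ≤ ρ := huAnn.1
      have hu2 : ρ - b < dist 1 u := huAnn.2
      have hgp1 : gromovProd u w₁ 1 < K := by
        by_contra hcon
        push_neg at hcon
        exact huU.2 (Or.inl ⟨hu1, hcon⟩)
      have hgp2 : gromovProd u w₂ 1 < K := by
        by_contra hcon
        push_neg at hcon
        exact huU.2 (Or.inr ⟨hu1, hcon⟩)
      have hd1u : dist u 1 = dist 1 u := dist_comm u 1
      have hid1 : dist (p * u) 1 = dist u 1 + dist w₁ 1 - 2 * gromovProd u w₁ 1 := by
        rw [hmulnorm u]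
        have hgp : gromovProd u w₁ 1 = (dist u 1 + dist w₁ 1 - dist u w₁) / 2 := rfl
        rw [hgp]; ring
      have hid2 : dist (p * u) x = dist u 1 + dist w₂ 1 - 2 * gromovProd u w₂ 1 := by
        rw [hmulx u]
        have hgp : gromovProd u w₂ 1 = (dist u 1 + dist w₂ 1 - dist u w₂) / 2 := rfl
        rw [hgp]; ring
      have hnormg : dist 1 (p * u) = dist (p * u) 1 := dist_comm 1 (p * u)
      have hgp1nn : 0 ≤ gromovProd u w₁ 1 := gp_nonneg u w₁ 1
      have hgp2nn : 0 ≤ gromovProd u w₂ 1 := gp_nonneg u w₂ 1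
      have hg_le : dist 1 (p * u) ≤ r := by
        rw [hnormg, hid1, hw₁norm]
        linarith only [hu1, hd1u, hp1, hgp1nn, hsum]
      have hg_ge : ts - c + (ρ - b) - 2 * K ≤ dist 1 (p * u) := by
        rw [hnormg, hid1, hw₁norm]
        linarith only [hu2, hd1u, hp2, hgp1]
      have hg_gt : r - a < dist 1 (p * u) := by
        rw [ha₀def] at ha
        linarith only [hg_ge, hsum, ha]
      -- upper bound on the Gromov product (g|x)
      have hdpg : dist p (p * u) = dist 1 u := hmulp u
      have hd1p : dist 1 p = dist p 1 := dist_comm 1 p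
      have hA1 : dist 1 u - K ≤ gromovProd 1 p (p * u) := by
        have hgp : gromovProd 1 p (p * u) =
            (dist 1 (p * u) + dist p (p * u) - dist 1 p) / 2 := rfl
        rw [hgp, hdpg, hd1p]
        linarith only [hnormg, hid1, hw₁norm, hgp1, hd1u]
      have hA2 : dist 1 u - K ≤ gromovProd x p (p * u) := by
        have hgp : gromovProd x p (p * u) =
            (dist x (p * u) + dist p (p * u) - dist x p) / 2 := rfl
        have hdxg : dist x (p * u) = dist (p * u) x := dist_comm x (p * u)
        rw [hgp, hdpg, hdxg, hid2, hdw₂]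
        linarith only [hgp2, hd1u]
      have hhyp2 := hhyp 1 x p (p * u)
      have hA3 : dist 1 u - K - δ ≤ gromovProd 1 x (p * u) := by
        have hm := le_min hA1 hA2
        linarith only [hm, hhyp2]
      have hgid : gromovProd (p * u) x 1 + gromovProd 1 x (p * u) = dist (p * u) 1 := by
        have e1 : gromovProd (p * u) x 1 =
            (dist (p * u) 1 + dist x 1 - dist (p * u) x) / 2 := rfl
        have e2 : gromovProd 1 x (p * u) =
            (dist 1 (p * u) + dist x (p * u) - dist 1 x) / 2 := rfl
        rw [e1, e2, dist_comm x 1, dist_comm x (p * u), dist_comm 1 (p * u)]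
        ring
      have hgx_ub : gromovProd (p * u) x 1 ≤ ts + c + K + δ := by
        have hgle2 : dist (p * u) 1 ≤ dist 1 u + dist p 1 := by
          rw [hid1, hw₁norm]; linarith only [hgp1nn, hd1u]
        linarith only [hgid, hA3, hgle2, hp1]
      -- lower bound on the Gromov product (g|x)
      have hB1 : dist p 1 - K ≤ gromovProd (p * u) p 1 := by
        have hgp : gromovProd (p * u) p 1 =
            (dist (p * u) 1 + dist p 1 - dist (p * u) p) / 2 := rfl
        have hdgp2 : dist (p * u) p = dist 1 u := by rw [dist_comm]; exact hdpg
        rw [hgp, hdgp2, hid1, hw₁norm]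
        linarith only [hgp1, hd1u]
      have hhyp3 := hhyp (p * u) x p 1
      have hgpxp1 : gromovProd x p 1 = gromovProd p x 1 := gp_comm x p 1
      have hgx_lb : ts - 2 * c - K - δ ≤ gromovProd (p * u) x 1 := by
        have hm1 : ts - 2 * c - K ≤ gromovProd (p * u) p 1 := by linarith only [hB1, hp2, hc]
        have hm2 : ts - 2 * c - K ≤ gromovProd x p 1 := by
          rw [hgpxp1]; linarith only [hgppx, hKpos]
        have hm := le_min hm1 hm2
        linarith only [hm, hhyp3]
      -- horofunction bounds
      have hgR : dist 1 (p * u) ≤ R_F := by rw [hRFdef]; linarith only [hg_le, hr, hc]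
      have hh := hhoro (p * u) hgR
      have hhub : horofn q (p * u) ≤ T₂ := by
        rw [hM₁def] at hdiff
        linarith only [hh.2, hgx_lb, hg_le, hsum, hdiff]
      have hhlb : T₁ ≤ horofn q (p * u) := by
        rw [hM₁def] at hdiff
        rw [hT₀def, hM₂def, hM₁def] at hT
        linarith only [hh.1, hgx_ub, hg_ge, hdiff, hT, hL'pos, hc]
      exact ⟨hg_gt, hg_le, hhlb, hhub⟩
    -- conclude the lower bound
    have hinj : Function.Injective (fun u : Γ => p * u) := fun u1 u2 h =>
      mul_left_cancel h
    have himgcard : (U.ncard : ℝ) ≤ (S.ncard : ℝ) := by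
      have h1 : ((fun u : Γ => p * u) '' U).ncard = U.ncard :=
        Set.ncard_image_of_injective U hinj
      have h2 : ((fun u : Γ => p * u) '' U).ncard ≤ S.ncard :=
        Set.ncard_le_ncard himgsub hSfin
      rw [h1] at h2
      exact_mod_cast h2
    have hsplitL : Real.exp (v * (r + T₂) / 2)
        = Real.exp (v * ρ) * Real.exp (v * ((M₁ + c) / 2)) := by
      rw [← Real.exp_add]
      congr 1
      rw [hρdef]; ring
    have hC₁ge : 4 * C₀ * Real.exp (v * ((M₁ + c) / 2)) ≤ C₁ := by
      rw [hC₁def]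
      have h1 : Real.exp (v * ((M₁ + c) / 2)) ≤ Real.exp (v * (KU + (M₁ + c) / 2 + 1)) :=
        Real.exp_le_exp.2 (by linarith only [mul_pos hv hKUpos, hv])
      linarith only [mul_le_mul_of_nonneg_left h1 (le_of_lt hC₀)]
    have hC₁pos : 0 < C₁ := lt_of_lt_of_le one_pos hC₁1
    have hfirst : C₁⁻¹ * Real.exp (v * (r + T₂) / 2) ≤ C₀⁻¹ / 4 * Real.exp (v * ρ) := by
      rw [hsplitL]
      have h1 : C₁⁻¹ * Real.exp (v * ((M₁ + c) / 2)) ≤ (4 * C₀)⁻¹ :=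
        aux_inv (by positivity) (Real.exp_pos _) hC₁pos hC₁ge
      have h2 : ((4 : ℝ) * C₀)⁻¹ = C₀⁻¹ / 4 := by
        rw [mul_inv]; ring
      calc C₁⁻¹ * (Real.exp (v * ρ) * Real.exp (v * ((M₁ + c) / 2)))
          = (C₁⁻¹ * Real.exp (v * ((M₁ + c) / 2))) * Real.exp (v * ρ) := by ring
        _ ≤ (4 * C₀)⁻¹ * Real.exp (v * ρ) :=
            mul_le_mul_of_nonneg_right h1 (le_of_lt (Real.exp_pos _))
        _ = C₀⁻¹ / 4 * Real.exp (v * ρ) := by rw [h2]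
    linarith only [hfirst, hUcard, himgcard]
  · -- UPPER BOUND
    by_cases hcase : T₂ ≤ r
    · obtain ⟨tU, htUdef⟩ : ∃ y : ℝ, y = (r - T₂) / 2 := ⟨_, rfl⟩
      have htU0 : 0 ≤ tU := by rw [htUdef]; linarith only [hcase]
      have htUx : tU ≤ dist 1 x - c := by
        rw [htUdef]
        rw [hRFdef] at hxnorm
        linarith only [hxnorm, hT₁r, hT, hT₀pos, hr]
      obtain ⟨p, hp1, hp2, hp3⟩ := exists_qg_point (hqg 1 x) htU0 htUx
      have hgpx : tU - 2 * c ≤ gromovProd p x 1 := by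
        have hid : gromovProd p x 1 = (dist p 1 + dist x 1 - dist p x) / 2 := rfl
        have hd2 : dist x 1 = dist 1 x := dist_comm x 1
        rw [hid]
        linarith only [hp2, hp3, hd2, hc]
      have hsub : ∀ g ∈ S, dist p g ≤ (r + T₂) / 2 + KU := by
        intro g hg
        obtain ⟨hg1, hg2, hg3, hg4⟩ := hg
        have hgR : dist 1 g ≤ R_F := by rw [hRFdef]; linarith only [hg2, hr, hc]
        have hh := hhoro g hgR
        have hgx : (dist 1 g - T₂) / 2 - δ ≤ gromovProd g x 1 := by
          linarith only [hh.1, hg4]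
        have hd1 : dist g 1 = dist 1 g := dist_comm g 1
        have hidgp : gromovProd g p 1 = (dist g 1 + dist p 1 - dist g p) / 2 := rfl
        have hdr : dist p g = dist g p := dist_comm p g
        have h1 := hhyp g p x 1
        rw [hKUdef]
        rcases le_total (gromovProd g x 1) (gromovProd p x 1) with hmm | hmm
        · rw [min_eq_left hmm] at h1
          rw [hdr]
          have hdist : dist g p = dist g 1 + dist p 1 - 2 * gromovProd g p 1 := by
            rw [hidgp]; ring
          rw [htUdef] at hp1 hgpx
          linarith only [hdist, h1, hgx, hp1, hd1, hc, hδ]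
        · rw [min_eq_right hmm] at h1
          rw [hdr]
          have hdist : dist g p = dist g 1 + dist p 1 - 2 * gromovProd g p 1 := by
            rw [hidgp]; ring
          rw [htUdef] at hp1 hgpx
          linarith only [hdist, h1, hgpx, hp1, hd1, hg2, hδ]
      have hradU : 0 < (r + T₂) / 2 + KU := by linarith only [hrT2pos, hKUpos]
      calc (S.ncard : ℝ)
          ≤ (Nat.card ↥(closedBall p ((r + T₂) / 2 + KU)) : ℝ) := card_le_ball hproper hsub
        _ ≤ C₀ * Real.exp (v * ((r + T₂) / 2 + KU)) := (hgrowth p _ hradU).2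
        _ ≤ C₁ * Real.exp (v * (r + T₂) / 2) := by
            rw [hsplitU]
            have hC₀KU : C₀ * Real.exp (v * KU) ≤ C₁ := by
              rw [hC₁def]
              have h1 : Real.exp (v * KU) ≤ Real.exp (v * (KU + (M₁ + c) / 2 + 1)) :=
                Real.exp_le_exp.2 (by linarith only [mul_pos hv hM₁pos, mul_pos hv hc, hv])
              linarith only [mul_le_mul_of_nonneg_left h1 (le_of_lt hC₀),
                mul_pos hC₀ (Real.exp_pos (v * (KU + (M₁ + c) / 2 + 1)))]
            calc C₀ * (Real.exp (v * (r + T₂) / 2) * Real.exp (v * KU))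
                = (C₀ * Real.exp (v * KU)) * Real.exp (v * (r + T₂) / 2) := by ring
              _ ≤ C₁ * Real.exp (v * (r + T₂) / 2) :=
                  mul_le_mul_of_nonneg_right hC₀KU (le_of_lt (Real.exp_pos _))
    · push_neg at hcase
      have hsub : ∀ g ∈ S, dist (1 : Γ) g ≤ r := fun g hg => hg.2.1
      calc (S.ncard : ℝ)
          ≤ (Nat.card ↥(closedBall (1 : Γ) r) : ℝ) := card_le_ball hproper hsub
        _ ≤ C₀ * Real.exp (v * r) := (hgrowth 1 r hr).2
        _ ≤ C₁ * Real.exp (v * (r + T₂) / 2) := by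
            have h1 : Real.exp (v * r) ≤ Real.exp (v * (r + T₂) / 2) :=
              Real.exp_le_exp.2 (by nlinarith only [hv, hcase, mul_pos hv (sub_pos.2 hcase)])
            have hC₀C₁ : C₀ ≤ C₁ := by
              rw [hC₁def]
              have h2 : (1:ℝ) ≤ Real.exp (v * (KU + (M₁ + c) / 2 + 1)) :=
                Real.one_le_exp (mul_nonneg (le_of_lt hv) (by linarith only [hKUpos, hM₁pos, hc]))
              linarith only [mul_le_mul_of_nonneg_left h2 (le_of_lt hC₀), hC₀]
            exact mul_le_mul hC₀C₁ h1 (le_of_lt (Real.exp_pos _))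
              (by linarith only [hC₀, hC₀C₁])
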